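/- Let B be an infinite Blaschke product whose zero sequence (a_n) is uniformly discrete. For α > -1 and p > 0 there is a constant C > 0 (depending only on α, p and the separation constant δ) such that ∑_n (1-|a_n|)^{2-p+α} ≤ C·∬_U ((1-|B(z)|)/(1-|z|))^p (1-|z|)^α dA(z). -/

import Mathlib

open Complex MeasureTheory

noncomputable section

/-- The open unit disc in ℂ. -/
def unitDisc : Set ℂ := {z : ℂ | ‖z‖ < 1}

/-- A single Blaschke factor with zero `a`. -/
def bFactor (a z : ℂ) : ℂ :=
  ((starRingEnd ℂ) a / (‖a‖ : ℂ)) * ((a - z) / (1 - (starRingEnd ℂ) a * z))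

/-- The Blaschke product with zeros `a n`. -/
def blaschke (a : ℕ → ℂ) (z : ℂ) : ℂ := ∏' n, bFactor (a n) z

/-- The pseudohyperbolic distance on the unit disc. -/
def pdist (z w : ℂ) : ℝ := ‖(z - w) / (1 - (starRingEnd ℂ) w * z)‖

/-- The weighted Bergman integral `∬_U |g(z)|^p (1-|z|)^α dA(z)`;
`g ∈ A^p_α` means this is finite. -/
def bergman (g : ℂ → ℂ) (p α : ℝ) : ENNReal :=
  ∫⁻ z in unitDisc, ENNReal.ofReal (‖g z‖ ^ p * (1 - ‖z‖) ^ α)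

-- denominator nonzero
lemma den_ne (a z : ℂ) (ha : ‖a‖ < 1) (hz : ‖z‖ < 1) :
    (1 - (starRingEnd ℂ) a * z) ≠ 0 := by
  intro h
  have h1 : (1 : ℂ) = (starRingEnd ℂ) a * z := by linear_combination h
  have : (1:ℝ) = ‖(starRingEnd ℂ) a * z‖ := by
    rw [← h1]; simp
  rw [norm_mul, Complex.norm_conj] at this
  nlinarith [norm_nonneg a, norm_nonneg z]

-- strict inequality |z - a| < |1 - conj a z|
lemma num_lt_den (a z : ℂ) (ha : ‖a‖ < 1) (hz : ‖z‖ < 1) :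
    ‖z - a‖ < ‖1 - (starRingEnd ℂ) a * z‖ := by
  have key : Complex.normSq (1 - (starRingEnd ℂ) a * z) - Complex.normSq (z - a)
      = (1 - Complex.normSq a) * (1 - Complex.normSq z) := by
    simp [Complex.normSq_apply, Complex.sub_re, Complex.sub_im, Complex.mul_re, Complex.mul_im,
      Complex.one_re, Complex.one_im, Complex.conj_re, Complex.conj_im]
    ring
  have h1 : Complex.normSq a < 1 := by
    rw [Complex.normSq_eq_norm_sq]; nlinarith [norm_nonneg a]
  have h2 : Complex.normSq z < 1 := by
    rw [Complex.normSq_eq_norm_sq]; nlinarith [norm_nonneg z]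
  have h3 : Complex.normSq (z - a) < Complex.normSq (1 - (starRingEnd ℂ) a * z) := by nlinarith
  have := Complex.sq_norm (z - a)
  have := Complex.sq_norm (1 - (starRingEnd ℂ) a * z)
  nlinarith [norm_nonneg (z - a), norm_nonneg (1 - (starRingEnd ℂ) a * z)]

lemma pdist_lt_one (z a : ℂ) (ha : ‖a‖ < 1) (hz : ‖z‖ < 1) :
    pdist z a < 1 := by
  have h := num_lt_den a z ha hz
  rw [pdist, norm_div]
  have hd : 0 < ‖1 - (starRingEnd ℂ) a * z‖ :=
    lt_of_le_of_lt (norm_nonneg _) h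
  rw [div_lt_one hd]; exact h

lemma den_ge (a z : ℂ) (ha : ‖a‖ ≤ 1) :
    1 - ‖z‖ ≤ ‖1 - (starRingEnd ℂ) a * z‖ := by
  have h1 : ‖(starRingEnd ℂ) a * z‖ ≤ ‖z‖ := by
    rw [norm_mul, Complex.norm_conj]
    nlinarith [norm_nonneg a, norm_nonneg z]
  have h2 := norm_sub_norm_le (1 : ℂ) ((starRingEnd ℂ) a * z)
  simp only [norm_one] at h2
  linarith

lemma pdist_le (z a : ℂ) (ha : ‖a‖ < 1) (hz : ‖z‖ ≤ 1) :
    pdist z a ≤ ‖z - a‖ / (1 - ‖a‖) := by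
  have hd : 1 - ‖a‖ ≤ ‖1 - (starRingEnd ℂ) a * z‖ := by
    have : ‖(starRingEnd ℂ) a * z‖ ≤ ‖a‖ := by
      rw [norm_mul, Complex.norm_conj]
      nlinarith [norm_nonneg a, norm_nonneg z]
    have h2 := norm_sub_norm_le (1 : ℂ) ((starRingEnd ℂ) a * z)
    simp only [norm_one] at h2
    linarith
  rw [pdist, norm_div]
  apply div_le_div_of_nonneg_left (norm_nonneg _) (by linarith) hd

lemma abs_bFactor (a z : ℂ) (ha : 0 < ‖a‖) :
    ‖bFactor a z‖ = pdist z a := by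
  rw [bFactor, pdist, norm_mul, norm_div, Complex.norm_conj,
    Complex.norm_real, Real.norm_eq_abs, _root_.abs_of_pos ha, div_self (ne_of_gt ha), one_mul,
    norm_div, norm_div]
  rw [norm_sub_rev a z]

lemma bFactor_sub_one (a z : ℂ) (ha0 : 0 < ‖a‖) (ha : ‖a‖ < 1)
    (hz : ‖z‖ < 1) :
    bFactor a z - 1 = -(((1:ℂ) - (‖a‖ : ℂ)) * ((‖a‖ : ℂ) + (starRingEnd ℂ) a * z))
      / (((‖a‖ : ℂ)) * (1 - (starRingEnd ℂ) a * z)) := by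
  have hne1 : ((‖a‖ : ℝ) : ℂ) ≠ 0 := by
    simp only [ne_eq, Complex.ofReal_eq_zero]; exact ne_of_gt ha0
  have hne2 := den_ne a z ha hz
  have hkey : (starRingEnd ℂ) a * a = ((‖a‖ : ℝ) : ℂ) ^ 2 := by
    rw [mul_comm, Complex.mul_conj, Complex.normSq_eq_norm_sq]
    push_cast; ring
  rw [bFactor]
  field_simp
  linear_combination hkey

lemma abs_bFactor_sub_one (a z : ℂ) (ha0 : 0 < ‖a‖) (ha : ‖a‖ < 1)
    (hz : ‖z‖ < 1) :
    ‖bFactor a z - 1‖ ≤ 2 / (1 - ‖z‖) * (1 - ‖a‖) := by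
  rw [bFactor_sub_one a z ha0 ha hz]
  rw [norm_div, norm_neg, norm_mul, norm_mul]
  have h1 : ‖(1:ℂ) - (‖a‖ : ℂ)‖ = 1 - ‖a‖ := by
    rw [show ((1:ℂ) - (‖a‖ : ℂ)) = (((1 - ‖a‖ : ℝ)) : ℂ) by push_cast; ring,
      Complex.norm_real, Real.norm_eq_abs, _root_.abs_of_nonneg (by linarith)]
  have h2 : ‖(‖a‖ : ℂ) + (starRingEnd ℂ) a * z‖ ≤ 2 * ‖a‖ := by
    calc ‖(‖a‖ : ℂ) + (starRingEnd ℂ) a * z‖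
        ≤ ‖(‖a‖ : ℂ)‖ + ‖(starRingEnd ℂ) a * z‖ :=
          norm_add_le _ _
      _ ≤ 2 * ‖a‖ := by
          rw [Complex.norm_real, Real.norm_eq_abs, _root_.abs_of_pos ha0, norm_mul, Complex.norm_conj]
          nlinarith [norm_nonneg z, norm_nonneg a]
  have h3 : ‖(‖a‖ : ℂ)‖ = ‖a‖ := by
    rw [Complex.norm_real, Real.norm_eq_abs, _root_.abs_of_pos ha0]
  have h4 : 1 - ‖z‖ ≤ ‖1 - (starRingEnd ℂ) a * z‖ := den_ge a z (le_of_lt ha)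
  rw [h1, h3]
  have hzpos : 0 < 1 - ‖z‖ := by linarith
  have hdenpos : 0 < ‖a‖ * ‖1 - (starRingEnd ℂ) a * z‖ := by
    apply mul_pos ha0; linarith
  rw [div_le_iff₀ hdenpos]
  have : (1 - ‖a‖) * ‖(‖a‖ : ℂ) + (starRingEnd ℂ) a * z‖
      ≤ (1 - ‖a‖) * (2 * ‖a‖) :=
    mul_le_mul_of_nonneg_left h2 (by linarith)
  calc (1 - ‖a‖) * ‖(‖a‖ : ℂ) + (starRingEnd ℂ) a * z‖
      ≤ (1 - ‖a‖) * (2 * ‖a‖) := this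
    _ ≤ 2 / (1 - ‖z‖) * (1 - ‖a‖) *
        (‖a‖ * (1 - ‖z‖)) := by
        rw [div_mul_eq_mul_div, div_mul_eq_mul_div, le_div_iff₀ hzpos]
        ring_nf; nlinarith [norm_nonneg a]
    _ ≤ 2 / (1 - ‖z‖) * (1 - ‖a‖) *
        (‖a‖ * ‖1 - (starRingEnd ℂ) a * z‖) := by
        apply mul_le_mul_of_nonneg_left
        · exact mul_le_mul_of_nonneg_left h4 (le_of_lt ha0)
        · apply mul_nonneg (div_nonneg (by norm_num) (by linarith)) (by linarith)

-- If one factor vanishes, the product is 0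
lemma hasProd_zero_of_eq_zero {f : ℕ → ℂ} {m : ℕ} (h : f m = 0) : HasProd f 0 := by
  have : ∀ᶠ (s : Finset ℕ) in Filter.atTop, (∏ i ∈ s, f i) = 0 := by
    filter_upwards [Filter.eventually_ge_atTop ({m} : Finset ℕ)] with s hs
    exact Finset.prod_eq_zero (hs (Finset.mem_singleton_self m)) h
  exact Filter.Tendsto.congr' (Filter.EventuallyEq.symm this) tendsto_const_nhds

-- norm of a tprod is at most norm of one factor if all factors have norm ≤ 1
lemma abs_tprod_le {f : ℕ → ℂ} (hm : Multipliable f) (h1 : ∀ k, ‖f k‖ ≤ 1)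
    (n₀ : ℕ) : ‖∏' n, f n‖ ≤ ‖f n₀‖ := by
  obtain ⟨P, hP⟩ := hm
  rw [hP.tprod_eq]
  have hcont : Filter.Tendsto (fun s : Finset ℕ => ‖∏ i ∈ s, f i‖)
      Filter.atTop (nhds (‖P‖)) :=
    (continuous_norm.continuousAt).tendsto.comp hP
  refine le_of_tendsto hcont ?_
  filter_upwards [Filter.eventually_ge_atTop ({n₀} : Finset ℕ)] with s hs
  have hn₀ : n₀ ∈ s := hs (Finset.mem_singleton_self n₀)
  rw [norm_prod]
  rw [← Finset.mul_prod_erase _ _ hn₀]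
  have : (∏ i ∈ s.erase n₀, ‖f i‖) ≤ 1 :=
    Finset.prod_le_one (fun i _ => norm_nonneg _) (fun i _ => h1 i)
  nlinarith [norm_nonneg (f n₀), Finset.prod_nonneg
    (fun i (_ : i ∈ s.erase n₀) => norm_nonneg (f i))]

-- multipliability of the Blaschke product
lemma blaschke_multipliable (a : ℕ → ℂ) (ha : ∀ n, 0 < ‖a n‖ ∧ ‖a n‖ < 1)
    (hsum : Summable (fun n => 1 - ‖a n‖)) (z : ℂ) (hz : ‖z‖ < 1)
    (hne : ∀ m, bFactor (a m) z ≠ 0) :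
    Multipliable (fun n => bFactor (a n) z) := by
  have hzpos : 0 < 1 - ‖z‖ := by linarith
  set g : ℕ → ℝ := fun n => 2 / (1 - ‖z‖) * (1 - ‖a n‖) with hg
  have hgsum : Summable g := hsum.mul_left _
  have hgb : ∀ n, ‖bFactor (a n) z - 1‖ ≤ g n := fun n =>
    abs_bFactor_sub_one (a n) z (ha n).1 (ha n).2 hz
  have hlog : Summable (fun n => Complex.log (bFactor (a n) z)) := by
    have hg0 : Filter.Tendsto g Filter.atTop (nhds 0) := hgsum.tendsto_atTop_zero
    have hev : ∀ᶠ n in Filter.atTop, ‖Complex.log (bFactor (a n) z)‖ ≤ (3/2) * g n := by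
      filter_upwards [hg0.eventually_le_const (show (0:ℝ) < 1/2 by norm_num)] with n hn
      have hb := hgb n
      have h2 : ‖bFactor (a n) z - 1‖ ≤ 1/2 := by
        linarith
      have h3 := Complex.norm_log_one_add_half_le_self h2
      rw [add_sub_cancel] at h3
      refine h3.trans ?_
      nlinarith
    exact Summable.of_norm_bounded_eventually_nat (hgsum.mul_left (3/2)) hev
  exact Complex.multipliable_of_summable_log hlog

lemma abs_blaschke_le (a : ℕ → ℂ) (ha : ∀ n, 0 < ‖a n‖ ∧ ‖a n‖ < 1)
    (hsum : Summable (fun n => 1 - ‖a n‖)) (z : ℂ) (hz : ‖z‖ < 1)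
    (n₀ : ℕ) : ‖blaschke a z‖ ≤ pdist z (a n₀) := by
  by_cases h : ∃ m, bFactor (a m) z = 0
  · obtain ⟨m, hm⟩ := h
    rw [blaschke, (hasProd_zero_of_eq_zero hm).tprod_eq, norm_zero]
    exact norm_nonneg _
  · push_neg at h
    have hmul := blaschke_multipliable a ha hsum z hz h
    have h1 : ∀ k, ‖bFactor (a k) z‖ ≤ 1 := fun k => by
      rw [abs_bFactor _ _ (ha k).1]
      exact le_of_lt (pdist_lt_one z (a k) (ha k).2 hz)
    have := abs_tprod_le hmul h1 n₀
    rw [abs_bFactor _ _ (ha n₀).1] at this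
    exact this

lemma ball_facts (c : ℝ) (hc0 : 0 < c) (hc1 : c ≤ 1/8) (aa z : ℂ)
    (ha0 : 0 < ‖aa‖) (ha : ‖aa‖ < 1)
    (hz : ‖z - aa‖ < c * (1 - ‖aa‖)) :
    ‖z‖ < 1 ∧ (1 - ‖aa‖)/2 ≤ 1 - ‖z‖ ∧
      1 - ‖z‖ ≤ 2*(1 - ‖aa‖) ∧ pdist z aa ≤ 1/2 := by
  have hta : 0 < 1 - ‖aa‖ := by linarith
  have htri : ‖z‖ - ‖aa‖ ≤ ‖z - aa‖ := by
    have := norm_sub_norm_le z aa; simpa using this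
  have htri2 : ‖aa‖ - ‖z‖ ≤ ‖z - aa‖ := by
    have := norm_sub_norm_le aa z
    simpa [norm_sub_rev aa z] using this
  have h1 : ‖z‖ < 1 := by nlinarith
  refine ⟨h1, by nlinarith, by nlinarith, ?_⟩
  have h2 := pdist_le z aa ha h1.le
  have h3 : ‖z - aa‖ / (1 - ‖aa‖) ≤ c := by
    rw [div_le_iff₀ hta]; nlinarith
  linarith

lemma real_lb (α p : ℝ) (hp : 0 < p) (t s w : ℝ) (ht : 0 < t) (hs1 : t/2 ≤ s)
    (hs2 : s ≤ 2*t) (hs0 : 0 < s) (hw : 1/2 ≤ w) :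
    (1/2:ℝ)^p * ((2:ℝ)^(-|α-p|) * t^(α-p)) ≤ (w / s)^p * s^α := by
  have A1 : ((1/2:ℝ)/s)^p ≤ (w/s)^p :=
    Real.rpow_le_rpow (div_nonneg (by norm_num) hs0.le) ((div_le_div_iff_of_pos_right hs0).mpr hw) hp.le
  have A2 : ((1/2:ℝ)/s)^p * s^α = (1/2:ℝ)^p * s^(α-p) := by
    rw [Real.div_rpow (by norm_num) hs0.le, Real.rpow_sub hs0]; ring
  have A3 : (2:ℝ)^(-|α-p|) * t^(α-p) ≤ s^(α-p) := by
    rcases le_or_gt 0 (α - p) with h|h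
    · rw [_root_.abs_of_nonneg h]
      calc (2:ℝ)^(-(α-p)) * t^(α-p) = (t/2)^(α-p) := by
            rw [div_eq_mul_inv, Real.mul_rpow ht.le (by norm_num),
              Real.inv_rpow (by norm_num), ← Real.rpow_neg (by norm_num)]; ring
        _ ≤ s^(α-p) := Real.rpow_le_rpow (by positivity) hs1 h
    · rw [_root_.abs_of_neg h, neg_neg]
      calc (2:ℝ)^(α-p) * t^(α-p) = (2*t)^(α-p) := (Real.mul_rpow (by norm_num) ht.le).symm
        _ ≤ s^(α-p) := Real.rpow_le_rpow_of_nonpos hs0 hs2 h.le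
  calc (1/2:ℝ)^p * ((2:ℝ)^(-|α-p|) * t^(α-p)) ≤ (1/2:ℝ)^p * s^(α-p) := by
        apply mul_le_mul_of_nonneg_left A3 (by positivity)
    _ = ((1/2:ℝ)/s)^p * s^α := A2.symm
    _ ≤ (w/s)^p * s^α := mul_le_mul_of_nonneg_right A1 (Real.rpow_nonneg hs0.le α)

/-- The key estimate in Theorem 1 (Protas): for uniformly discrete zeros with separation
constant `δ`, `∑ (1-|a_n|)^(2-p+α) ≲ ∬_U ((1-|B|)/(1-|z|))^p (1-|z|)^α dA`, with a
constant depending only on `α`, `p`, and `δ`. -/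
theorem stmt13 (α p δ : ℝ) (hα : -1 < α) (hp : 0 < p) (hδ : 0 < δ) :
    ∃ C > (0 : ℝ), ∀ (a : ℕ → ℂ) (B : ℂ → ℂ),
      (∀ n, 0 < ‖a n‖ ∧ ‖a n‖ < 1) →
      Summable (fun n => 1 - ‖a n‖) →
      (∀ m n, m ≠ n → δ ≤ pdist (a m) (a n)) →
      (∀ z ∈ unitDisc, B z = blaschke a z) →
      ∑' n, ENNReal.ofReal ((1 - ‖a n‖) ^ (2 - p + α)) ≤
        ENNReal.ofReal C * ∫⁻ z in unitDisc,
          ENNReal.ofReal (((1 - ‖B z‖) / (1 - ‖z‖)) ^ p *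
            (1 - ‖z‖) ^ α) := by

  set c : ℝ := min δ 1 / 8 with hcdef
  have hc0 : 0 < c := by
    apply div_pos _ (by norm_num); exact lt_min hδ one_pos
  have hc1 : c ≤ 1/8 := by
    rw [hcdef]; have := min_le_right δ 1; linarith
  have hcδ : 8 * c ≤ δ := by
    rw [hcdef]; have := min_le_left δ 1; linarith
  set M : ℝ := (2:ℝ)^(-|α - p|) with hMdef
  have hM0 : 0 < M := Real.rpow_pos_of_pos (by norm_num) _
  set K : ℝ := (1/2:ℝ)^p * M * (c^2 * Real.pi) with hKdef
  have hhalf : (0:ℝ) < (1/2:ℝ)^p := Real.rpow_pos_of_pos (by norm_num) _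
  have hK0 : 0 < K := by
    apply mul_pos (mul_pos hhalf hM0); positivity
  refine ⟨1/K, by positivity, ?_⟩
  intro a B ha hsum hsep hB
  have hta : ∀ n, 0 < 1 - ‖a n‖ := fun n => by have := (ha n).2; linarith
  set E : ℕ → Set ℂ := fun n => Metric.ball (a n) (c * (1 - ‖a n‖)) with hEdef
  have hmem : ∀ n z, z ∈ E n ↔ ‖z - a n‖ < c * (1 - ‖a n‖) := by
    intro n z
    rw [hEdef]
    simp [Metric.mem_ball, Complex.dist_eq]
  have hfacts : ∀ n z, z ∈ E n →
      ‖z‖ < 1 ∧ (1 - ‖a n‖)/2 ≤ 1 - ‖z‖ ∧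
      1 - ‖z‖ ≤ 2*(1 - ‖a n‖) ∧ pdist z (a n) ≤ 1/2 := by
    intro n z hz
    exact ball_facts c hc0 hc1 (a n) z (ha n).1 (ha n).2 ((hmem n z).mp hz)
  have hdisj : Pairwise (Function.onFun Disjoint E) := by
    intro m n hmn
    rw [Function.onFun, Set.disjoint_left]
    intro z hzm hzn
    obtain ⟨h1m, h2m, h3m, _⟩ := hfacts m z hzm
    obtain ⟨h1n, h2n, h3n, _⟩ := hfacts n z hzn
    have hsep' := hsep m n hmn
    have hpd : pdist (a m) (a n) ≤ ‖a m - a n‖ / (1 - ‖a n‖) :=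
      pdist_le (a m) (a n) (ha n).2 (ha m).2.le
    have htr : ‖a m - a n‖ ≤ ‖a m - z‖ + ‖z - a n‖ := by
      have := norm_add_le (a m - z) (z - a n)
      simpa using this
    have hm' := (hmem m z).mp hzm
    have hn' := (hmem n z).mp hzn
    have hzm' : ‖a m - z‖ < c * (1 - ‖a m‖) := by
      rw [norm_sub_rev]; exact hm'
    have h4 : 1 - ‖a m‖ ≤ 4 * (1 - ‖a n‖) := by linarith
    have h5 : ‖a m - a n‖ / (1 - ‖a n‖) ≤ 5 * c := by
      rw [div_le_iff₀ (hta n)]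
      nlinarith [hta m, hta n]
    linarith
  have hsub : (⋃ n, E n) ⊆ unitDisc := by
    rintro z ⟨_, ⟨n, rfl⟩, hz⟩
    exact (hfacts n z hz).1
  have hmeas : ∀ n, MeasurableSet (E n) := fun n => measurableSet_ball
  set F : ℂ → ENNReal := fun z => ENNReal.ofReal
    (((1 - ‖B z‖) / (1 - ‖z‖)) ^ p * (1 - ‖z‖) ^ α) with hFdef
  have hpt : ∀ n z, z ∈ E n →
      (1/2:ℝ)^p * (M * (1 - ‖a n‖)^(α-p)) ≤
        ((1 - ‖B z‖) / (1 - ‖z‖)) ^ p * (1 - ‖z‖) ^ α := by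
    intro n z hz
    obtain ⟨h1, h2, h3, h4⟩ := hfacts n z hz
    have hs0 : 0 < 1 - ‖z‖ := by linarith
    have hBz : ‖B z‖ ≤ 1/2 := by
      rw [hB z h1]
      exact (abs_blaschke_le a ha hsum z h1 n).trans h4
    exact real_lb α p hp (1 - ‖a n‖) (1 - ‖z‖) (1 - ‖B z‖)
      (hta n) h2 h3 hs0 (by linarith)
  have hint : ∀ n, ENNReal.ofReal (K * (1 - ‖a n‖) ^ (2 - p + α)) ≤
      ∫⁻ z in E n, F z := by
    intro n
    have hklb : ∫⁻ _z in E n,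
        ENNReal.ofReal ((1/2:ℝ)^p * (M * (1 - ‖a n‖)^(α-p))) ≤
        ∫⁻ z in E n, F z := by
      apply setLIntegral_mono' (hmeas n)
      intro z hz
      exact ENNReal.ofReal_le_ofReal (hpt n z hz)
    rw [setLIntegral_const] at hklb
    refine le_trans ?_ hklb
    have hvol : volume (E n) =
        ENNReal.ofReal ((c * (1 - ‖a n‖))^2 * Real.pi) := by
      rw [hEdef]
      simp only []
      rw [Complex.volume_ball,
        ← ENNReal.ofReal_pow (mul_nonneg hc0.le (hta n).le),
        ← ENNReal.ofReal_coe_nnreal, NNReal.coe_real_pi,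
        ← ENNReal.ofReal_mul (pow_nonneg (mul_nonneg hc0.le (hta n).le) 2)]
    have hT : (1 - ‖a n‖) ^ (2 - p + α) =
        (1 - ‖a n‖)^(α-p) * (1 - ‖a n‖)^(2:ℕ) := by
      rw [← Real.rpow_natCast (1 - ‖a n‖) 2, ← Real.rpow_add (hta n)]
      norm_num
      congr 1
      ring
    have hre : K * (1 - ‖a n‖) ^ (2 - p + α) =
        ((1/2:ℝ)^p * (M * (1 - ‖a n‖)^(α-p))) *
          ((c * (1 - ‖a n‖))^2 * Real.pi) := by
      rw [hKdef, hT]; ring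
    rw [hre, ENNReal.ofReal_mul (mul_nonneg hhalf.le (mul_nonneg hM0.le
      (Real.rpow_nonneg (hta n).le _))), hvol]
  calc ∑' n, ENNReal.ofReal ((1 - ‖a n‖) ^ (2 - p + α))
      ≤ ∑' n, ENNReal.ofReal (1/K) * ∫⁻ z in E n, F z := by
        apply ENNReal.tsum_le_tsum
        intro n
        have heq : (1 - ‖a n‖) ^ (2 - p + α) =
            (1/K) * (K * (1 - ‖a n‖) ^ (2 - p + α)) := by
          field_simp
        rw [heq, ENNReal.ofReal_mul (one_div_nonneg.mpr hK0.le)]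
        exact mul_le_mul_right (hint n) _
    _ = ENNReal.ofReal (1/K) * ∑' n, ∫⁻ z in E n, F z := ENNReal.tsum_mul_left
    _ = ENNReal.ofReal (1/K) * ∫⁻ z in ⋃ n, E n, F z := by
        rw [lintegral_iUnion hmeas hdisj]
    _ ≤ ENNReal.ofReal (1/K) * ∫⁻ z in unitDisc, F z :=
        mul_le_mul_right (lintegral_mono_set hsub) _
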